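/- Let σ = [[1,0],[0,-1]] and τ = [[0,1],[1,0]] be the 2×2 Pauli matrices. For all real numbers α ≥ 0 and β ≥ 0, the function f(t) = trace(exp(t·α·σ + β·τ)) of the real variable t is exponentially convex. -/

import Mathlib

open Matrix NormedSpace ComplexOrder

noncomputable def pauliσ : Matrix (Fin 2) (Fin 2) ℂ := !![1, 0; 0, -1]

noncomputable def pauliτ : Matrix (Fin 2) (Fin 2) ℂ := !![0, 1; 1, 0]

/-- A function `f : ℝ → ℝ` is exponentially convex if it is continuous and all the
quadratic forms `∑ f(t_r + t_s) ξ_r conj(ξ_s)` are nonnegative (real). -/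
def ExpConvex (f : ℝ → ℝ) : Prop :=
  Continuous f ∧ ∀ (N : ℕ) (t : Fin N → ℝ) (ξ : Fin N → ℂ),
    0 ≤ ∑ r, ∑ s, (f (t r + t s) : ℂ) * ξ r * (starRingEnd ℂ) (ξ s)

namespace StmtAux

open Filter Topology

/-! ### Banach algebra estimates and the Lie–Trotter product formula -/

section Banach

open scoped Nat

variable {𝔸 : Type*} [NormedRing 𝔸] [NormedAlgebra ℂ 𝔸] [CompleteSpace 𝔸] [NormOneClass 𝔸]

lemma norm_pow_le_of_le {c : 𝔸} {M : ℝ} (hc : ‖c‖ ≤ M) (k : ℕ) : ‖c ^ k‖ ≤ M ^ k := by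
  have h1 : ‖c ^ k‖ ≤ ‖c‖ ^ k := by
    rcases Nat.eq_zero_or_pos k with h | h
    · simp [h]
    · exact norm_pow_le' c h
  exact le_trans h1 (pow_le_pow_left₀ (norm_nonneg c) hc k)

lemma norm_term_le (x : 𝔸) (n : ℕ) : ‖((n ! : ℂ))⁻¹ • x ^ n‖ ≤ ‖x‖ ^ n / n ! := by
  rw [norm_smul, norm_inv]
  have h1 : ‖((n ! : ℕ) : ℂ)‖ = ((n ! : ℕ) : ℝ) := Complex.norm_natCast _
  rw [h1, div_eq_inv_mul]
  exact mul_le_mul_of_nonneg_left (norm_pow_le_of_le le_rfl n) (by positivity)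

lemma real_exp_eq_tsum (y : ℝ) : Real.exp y = ∑' n : ℕ, y ^ n / n ! := by
  rw [Real.exp_eq_exp_ℝ]
  exact congrFun (exp_eq_tsum_div (𝔸 := ℝ)) y

lemma norm_exp_le_exp_norm (x : 𝔸) : ‖exp x‖ ≤ Real.exp ‖x‖ := by
  rw [exp_eq_tsum ℂ]
  refine le_trans (norm_tsum_le_tsum_norm (norm_expSeries_summable' (𝕂 := ℂ) x)) ?_
  rw [real_exp_eq_tsum]
  exact Summable.tsum_le_tsum (norm_term_le x) (norm_expSeries_summable' (𝕂 := ℂ) x)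
    (Real.summable_pow_div_factorial ‖x‖)

lemma norm_exp_sub_one_sub_id_le (x : 𝔸) :
    ‖exp x - 1 - x‖ ≤ ‖x‖ ^ 2 * Real.exp ‖x‖ := by
  have hs : Summable fun n : ℕ => ((n ! : ℂ))⁻¹ • x ^ n := expSeries_summable' x
  have hs1 : Summable fun n : ℕ => (((n + 1)! : ℂ))⁻¹ • x ^ (n + 1) :=
    (summable_nat_add_iff 1).mpr hs
  have e1 : exp x = 1 + (x + ∑' n : ℕ, (((n + 1 + 1)! : ℂ))⁻¹ • x ^ (n + 1 + 1)) := by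
    rw [exp_eq_tsum ℂ]
    show (∑' n : ℕ, ((n ! : ℂ))⁻¹ • x ^ n) = _
    rw [Summable.tsum_eq_zero_add hs, Summable.tsum_eq_zero_add hs1]
    norm_num
  have e2 : exp x - 1 - x = ∑' n : ℕ, (((n + 2)! : ℂ))⁻¹ • x ^ (n + 2) := by
    rw [e1]; abel
  rw [e2]
  have hsn : Summable fun n : ℕ => ‖(((n + 2)! : ℂ))⁻¹ • x ^ (n + 2)‖ :=
    (summable_nat_add_iff (f := fun n : ℕ => ‖((n ! : ℂ))⁻¹ • x ^ n‖) 2).mpr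
      (norm_expSeries_summable' (𝕂 := ℂ) x)
  refine le_trans (norm_tsum_le_tsum_norm hsn) ?_
  have hsum2 : Summable fun n : ℕ => ‖x‖ ^ 2 * (‖x‖ ^ n / n !) :=
    (Real.summable_pow_div_factorial ‖x‖).mul_left _
  have hbd : ∀ n : ℕ, ‖(((n + 2)! : ℂ))⁻¹ • x ^ (n + 2)‖ ≤ ‖x‖ ^ 2 * (‖x‖ ^ n / n !) := by
    intro n
    refine le_trans (norm_term_le x (n + 2)) ?_
    rw [pow_add, mul_comm (‖x‖ ^ n), mul_div_assoc]
    gcongr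
    omega
  refine le_trans (Summable.tsum_le_tsum hbd hsn hsum2) ?_
  rw [tsum_mul_left, real_exp_eq_tsum]

lemma norm_pow_sub_pow_le (a b : 𝔸) {M : ℝ} (ha : ‖a‖ ≤ M) (hb : ‖b‖ ≤ M) (hM : 1 ≤ M) :
    ∀ n : ℕ, ‖a ^ n - b ^ n‖ ≤ n * M ^ n * ‖a - b‖ := by
  intro n
  induction n with
  | zero => simp
  | succ n ih =>
    have hM0 : (0 : ℝ) ≤ M := le_trans zero_le_one hM
    have h1 : a ^ (n + 1) - b ^ (n + 1) = a ^ n * (a - b) + (a ^ n - b ^ n) * b := by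
      noncomm_ring
    rw [h1]
    refine le_trans (norm_add_le _ _) ?_
    have h2 : ‖a ^ n * (a - b)‖ ≤ M ^ n * ‖a - b‖ := by
      refine le_trans (norm_mul_le _ _) ?_
      gcongr
      exact norm_pow_le_of_le ha n
    have h3 : ‖(a ^ n - b ^ n) * b‖ ≤ (n * M ^ n * ‖a - b‖) * M := by
      refine le_trans (norm_mul_le _ _) ?_
      have hn0 : (0 : ℝ) ≤ (n : ℝ) * M ^ n * ‖a - b‖ := by positivity
      exact mul_le_mul ih hb (norm_nonneg b) hn0
    refine le_trans (add_le_add h2 h3) ?_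
    have : M ^ n * ‖a - b‖ + (n * M ^ n * ‖a - b‖) * M ≤
        M ^ (n + 1) * ‖a - b‖ + (n * M ^ (n + 1)) * ‖a - b‖ := by
      have hMn : M ^ n ≤ M ^ (n + 1) := pow_le_pow_right₀ hM (by omega)
      have e : ((n : ℝ) * M ^ n * ‖a - b‖) * M = (n : ℝ) * M ^ (n + 1) * ‖a - b‖ := by
        rw [pow_succ]; ring
      rw [e]
      gcongr
    refine le_trans this ?_
    exact le_of_eq (by push_cast; ring)
  
lemma trotter (x y : 𝔸) :
    Filter.Tendsto (fun n : ℕ => (exp ((n : ℂ)⁻¹ • x) * exp ((n : ℂ)⁻¹ • y)) ^ n)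
      Filter.atTop (nhds (exp (x + y))) := by
  set c : ℝ := ‖x‖ + ‖y‖ with hc
  have hc0 : 0 ≤ c := by positivity
  set E : ℝ := Real.exp c with hE
  have hE0 : 0 < E := Real.exp_pos c
  have hE1 : (1 : ℝ) ≤ E := Real.one_le_exp hc0
  set C : ℝ := 3 * E + c * E + E ^ 2 + 1 with hC
  have hC0 : 0 ≤ C := by positivity
  have key : ∀ n : ℕ, 1 ≤ n →
      ‖(exp ((n : ℂ)⁻¹ • x) * exp ((n : ℂ)⁻¹ • y)) ^ n - exp (x + y)‖ ≤
        E * (c ^ 2 * C) / n := by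
    intro n hn
    have hn0 : (0 : ℝ) < n := by exact_mod_cast hn
    have hn1 : (1 : ℝ) ≤ n := by exact_mod_cast hn
    have hnC : ((n : ℂ)) ≠ 0 := by
      simp only [ne_eq, Nat.cast_eq_zero]
      omega
    set u : 𝔸 := (n : ℂ)⁻¹ • x with hu
    set v : 𝔸 := (n : ℂ)⁻¹ • y with hv
    have hnorm_inv : ‖((n : ℂ))⁻¹‖ = (n : ℝ)⁻¹ := by
      rw [norm_inv, Complex.norm_natCast]
    have hun : ‖u‖ = ‖x‖ / n := by rw [hu, norm_smul, hnorm_inv]; ring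
    have hvn : ‖v‖ = ‖y‖ / n := by rw [hv, norm_smul, hnorm_inv]; ring
    have hd0 : (0:ℝ) ≤ c / n := by positivity
    have hcn : c / n ≤ c := div_le_self hc0 hn1
    have hud : ‖u‖ ≤ c / n := by
      rw [hun]; gcongr; rw [hc]; linarith [norm_nonneg y]
    have hvd : ‖v‖ ≤ c / n := by
      rw [hvn]; gcongr; rw [hc]; linarith [norm_nonneg x]
    have hwd : ‖u + v‖ ≤ c / n := by
      refine le_trans (norm_add_le u v) ?_
      rw [hun, hvn, hc, ← add_div]
    set M : ℝ := Real.exp (c / n) with hM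
    have hM1 : (1:ℝ) ≤ M := Real.one_le_exp hd0
    have hME : M ≤ E := Real.exp_le_exp.mpr hcn
    have hMn : M ^ n ≤ E := by
      rw [hM, ← Real.exp_nat_mul]
      apply Real.exp_le_exp.mpr
      rw [mul_div_cancel₀ c (ne_of_gt hn0)]
    have hbM : ‖exp u * exp v‖ ≤ M := by
      calc ‖exp u * exp v‖ ≤ ‖exp u‖ * ‖exp v‖ := norm_mul_le _ _
        _ ≤ Real.exp ‖u‖ * Real.exp ‖v‖ :=
            mul_le_mul (norm_exp_le_exp_norm u) (norm_exp_le_exp_norm v) (norm_nonneg _)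
              (Real.exp_pos _).le
        _ = Real.exp (‖u‖ + ‖v‖) := (Real.exp_add _ _).symm
        _ ≤ M := Real.exp_le_exp.mpr (by rw [hun, hvn, hc, ← add_div])
    have haM : ‖exp (u + v)‖ ≤ M := by
      refine le_trans (norm_exp_le_exp_norm _) (Real.exp_le_exp.mpr hwd)
    have hexpE : ∀ w : 𝔸, ‖w‖ ≤ c / n → ‖exp w - 1 - w‖ ≤ (c/n)^2 * E := by
      intro w hw
      refine le_trans (norm_exp_sub_one_sub_id_le w) ?_
      have h1 : Real.exp ‖w‖ ≤ E := Real.exp_le_exp.mpr (le_trans hw hcn)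
      exact mul_le_mul (by gcongr) h1 (Real.exp_pos _).le (by positivity)
    have hRu := hexpE u hud
    have hRv := hexpE v hvd
    have hRw := hexpE (u + v) hwd
    have hEv : ‖exp v‖ ≤ E :=
      le_trans (le_trans (norm_exp_le_exp_norm v) (Real.exp_le_exp.mpr hvd)) hME
    have hid : exp (u + v) - exp u * exp v
        = ((exp (u+v) - 1 - (u+v)) - (exp v - 1 - v) - u*v - u*(exp v - 1 - v))
          - (exp u - 1 - u) * exp v := by noncomm_ring
    have habd : ‖exp (u + v) - exp u * exp v‖ ≤ (c/n)^2 * C := by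
      rw [hid]
      have t1 : ‖u * v‖ ≤ (c/n)^2 := by
        refine le_trans (norm_mul_le _ _) ?_
        rw [sq]
        exact mul_le_mul hud hvd (norm_nonneg _) hd0
      have t2 : ‖u * (exp v - 1 - v)‖ ≤ (c/n)^2 * (c * E) := by
        refine le_trans (norm_mul_le _ _) ?_
        calc ‖u‖ * ‖exp v - 1 - v‖ ≤ (c/n) * ((c/n)^2 * E) :=
              mul_le_mul hud hRv (norm_nonneg _) hd0
          _ = (c/n)^2 * ((c/n) * E) := by ring
          _ ≤ (c/n)^2 * (c * E) := by gcongr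
      have t3 : ‖(exp u - 1 - u) * exp v‖ ≤ (c/n)^2 * E^2 := by
        refine le_trans (norm_mul_le _ _) ?_
        calc ‖exp u - 1 - u‖ * ‖exp v‖ ≤ ((c/n)^2*E) * E :=
              mul_le_mul hRu hEv (norm_nonneg _) (by positivity)
          _ = (c/n)^2 * E^2 := by ring
      refine le_trans (norm_sub_le _ _) ?_
      refine le_trans (add_le_add (le_trans (norm_sub_le _ _) (add_le_add (le_trans
        (norm_sub_le _ _) (add_le_add (le_trans (norm_sub_le _ _)
        (add_le_add hRw hRv)) t1)) t2)) t3) ?_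
      have hD : (0:ℝ) ≤ (c/n)^2 := by positivity
      nlinarith [mul_nonneg hD hE0.le]
    have hexp_eq : exp (x + y) = (exp (u + v)) ^ n := by
      letI : NormedAlgebra ℚ 𝔸 := NormedAlgebra.restrictScalars ℚ ℂ 𝔸
      rw [← NormedSpace.exp_nsmul]
      congr 1
      rw [hu, hv, ← smul_add, ← Nat.cast_smul_eq_nsmul ℂ, smul_smul,
        mul_inv_cancel₀ hnC, one_smul]
    rw [hexp_eq]
    have hkey := norm_pow_sub_pow_le (exp u * exp v) (exp (u + v)) hbM haM hM1 n
    have h5 : ‖exp u * exp v - exp (u+v)‖ ≤ (c/n)^2 * C := by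
      rw [norm_sub_rev]; exact habd
    refine le_trans hkey ?_
    calc (n:ℝ) * M^n * ‖exp u * exp v - exp (u+v)‖ ≤ (n:ℝ) * E * ((c/n)^2 * C) := by
          refine mul_le_mul (mul_le_mul le_rfl hMn (by positivity) hn0.le) h5
            (norm_nonneg _) (by positivity)
      _ = E * (c^2*C)/n := by field_simp
  have hquot : Filter.Tendsto (fun n : ℕ => E * (c^2*C)/(n:ℝ)) Filter.atTop (nhds 0) :=
    tendsto_const_div_atTop_nhds_zero_nat _
  rw [tendsto_iff_norm_sub_tendsto_zero]
  refine squeeze_zero' (Filter.Eventually.of_forall fun n => norm_nonneg _) ?_ hquot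
  filter_upwards [Filter.eventually_ge_atTop 1] with n hn using key n hn

end Banach

/-! ### Explicit 2×2 matrix exponentials -/

noncomputable def Wm (a c u : ℝ) : Matrix (Fin 2) (Fin 2) ℂ :=
  !![((Real.exp (u*a) * Real.cosh c : ℝ) : ℂ), ((Real.exp (u*a) * Real.sinh c : ℝ) : ℂ);
     ((Real.exp (-(u*a)) * Real.sinh c : ℝ) : ℂ), ((Real.exp (-(u*a)) * Real.cosh c : ℝ) : ℂ)]

lemma diag2 (x y : ℂ) : diagonal ![x, y] = !![x, 0; 0, y] := by
  ext i j
  fin_cases i <;> fin_cases j <;> simp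

lemma expPi (x y : ℂ) : exp ![x, y] = ![Complex.exp x, Complex.exp y] := by
  funext i
  rw [Pi.coe_exp]
  fin_cases i <;> simp [← Complex.exp_eq_exp_ℂ]

lemma expσ (c : ℝ) :
    exp ((c : ℂ) • pauliσ) = !![Complex.exp c, 0; 0, Complex.exp (-c)] := by
  have h : (c : ℂ) • pauliσ = diagonal ![(c : ℂ), -(c : ℂ)] := by
    ext i j
    fin_cases i <;> fin_cases j <;> simp [pauliσ]
  rw [h, Matrix.exp_diagonal, expPi, diag2]

noncomputable def Hm : Matrix (Fin 2) (Fin 2) ℂ := !![1, 1; 1, -1]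

lemma Hm_isUnit : IsUnit Hm := by
  apply (Matrix.isUnit_iff_isUnit_det Hm).mpr
  have h : Hm.det = -2 := by
    simp [Hm]
    norm_num
  rw [h]
  exact isUnit_iff_ne_zero.mpr (by norm_num)

lemma Hm_inv : Hm⁻¹ = (2 : ℂ)⁻¹ • Hm := by
  apply Matrix.inv_eq_right_inv
  ext i j
  fin_cases i <;> fin_cases j <;>
    simp [Hm, Matrix.mul_apply, Fin.sum_univ_two, Matrix.one_apply] <;> norm_num

lemma tau_conj (c : ℝ) :
    (c : ℂ) • pauliτ = Hm * diagonal ![(c : ℂ), -(c : ℂ)] * Hm⁻¹ := by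
  rw [Hm_inv, diag2]
  ext i j
  fin_cases i <;> fin_cases j <;>
    simp [Hm, pauliτ, Matrix.mul_apply, Fin.sum_univ_two] <;> ring

lemma expτ (c : ℝ) :
    exp ((c : ℂ) • pauliτ) =
      !![((Real.cosh c : ℝ) : ℂ), ((Real.sinh c : ℝ) : ℂ);
         ((Real.sinh c : ℝ) : ℂ), ((Real.cosh c : ℝ) : ℂ)] := by
  rw [tau_conj, Matrix.exp_conj Hm _ Hm_isUnit, Matrix.exp_diagonal, expPi, diag2, Hm_inv]
  ext i j
  fin_cases i <;> fin_cases j <;>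
    simp [Hm, Matrix.mul_apply, Fin.sum_univ_two, Complex.ofReal_cosh,
      Complex.ofReal_sinh, Complex.cosh, Complex.sinh] <;> ring

lemma Wm_eq (a c u : ℝ) :
    exp (((u * a : ℝ) : ℂ) • pauliσ) * exp ((c : ℂ) • pauliτ) = Wm a c u := by
  rw [show ((u * a : ℝ) : ℂ) = ((u * a : ℝ) : ℂ) from rfl, expσ, expτ]
  ext i j
  fin_cases i <;> fin_cases j <;>
    simp [Wm, Matrix.mul_apply, Fin.sum_univ_two, Complex.ofReal_exp,
      Complex.ofReal_cosh, Complex.ofReal_sinh, Complex.cosh, Complex.sinh] <;> ring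

/-! ### Positive-definite kernels of exponential type -/

def Nice (K : ℝ → ℝ → ℂ) : Prop :=
  ∃ (m : ℕ) (h : Fin m → ℝ → ℝ),
    ∀ t s, K t s = ∑ i, ((h i t : ℝ) : ℂ) * ((h i s : ℝ) : ℂ)

lemma Nice.add {K L : ℝ → ℝ → ℂ} (hK : Nice K) (hL : Nice L) :
    Nice fun t s => K t s + L t s := by
  obtain ⟨m, h, hh⟩ := hK
  obtain ⟨k, g, hg⟩ := hL
  refine ⟨m + k, Fin.append h g, fun t s => ?_⟩
  show K t s + L t s = _
  rw [Fin.sum_univ_add]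
  simp only [Fin.append_left, Fin.append_right]
  rw [hh, hg]

lemma Nice.mul {K L : ℝ → ℝ → ℂ} (hK : Nice K) (hL : Nice L) :
    Nice fun t s => K t s * L t s := by
  obtain ⟨m, h, hh⟩ := hK
  obtain ⟨k, g, hg⟩ := hL
  refine ⟨m * k, fun p t => h (finProdFinEquiv.symm p).1 t * g (finProdFinEquiv.symm p).2 t,
    fun t s => ?_⟩
  show K t s * L t s = _
  rw [hh, hg, Finset.sum_mul_sum, ← Fintype.sum_prod_type']
  refine (Fintype.sum_equiv finProdFinEquiv.symm _ _ fun p => ?_).symm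
  push_cast
  ring

lemma nice_of_eq {K : ℝ → ℝ → ℂ} (q a : ℝ) (hq : 0 ≤ q)
    (hK : ∀ t s, K t s = ((q * (Real.exp (a*t) * Real.exp (a*s)) : ℝ) : ℂ)) : Nice K := by
  refine ⟨1, fun _ t => Real.sqrt q * Real.exp (a * t), fun t s => ?_⟩
  rw [hK t s, Fin.sum_univ_one]
  push_cast
  rw [show ((q : ℝ) : ℂ) = ((Real.sqrt q : ℝ) : ℂ) * ((Real.sqrt q : ℝ) : ℂ) by
    rw [← Complex.ofReal_mul, Real.mul_self_sqrt hq]]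
  ring

lemma nice_Wm_entry (a c : ℝ) (hc : 0 ≤ c) (i j : Fin 2) :
    Nice fun t s => Wm a c (t + s) i j := by
  have hexp : ∀ (b t s : ℝ), Real.exp ((t+s)*b) = Real.exp (b*t) * Real.exp (b*s) := by
    intro b t s
    rw [← Real.exp_add]
    ring_nf
  fin_cases i <;> fin_cases j
  · refine nice_of_eq (Real.cosh c) a (Real.cosh_pos c).le fun t s => ?_
    show ((Real.exp ((t+s)*a) * Real.cosh c : ℝ) : ℂ) = _
    exact Complex.ofReal_inj.mpr (by rw [hexp a t s]; ring)
  · refine nice_of_eq (Real.sinh c) a (Real.sinh_nonneg_iff.mpr hc) fun t s => ?_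
    show ((Real.exp ((t+s)*a) * Real.sinh c : ℝ) : ℂ) = _
    exact Complex.ofReal_inj.mpr (by rw [hexp a t s]; ring)
  · refine nice_of_eq (Real.sinh c) (-a) (Real.sinh_nonneg_iff.mpr hc) fun t s => ?_
    show ((Real.exp (-((t+s)*a)) * Real.sinh c : ℝ) : ℂ) = _
    refine Complex.ofReal_inj.mpr ?_
    rw [show -((t+s)*a) = (t+s)*(-a) by ring, hexp (-a) t s]
    ring
  · refine nice_of_eq (Real.cosh c) (-a) (Real.cosh_pos c).le fun t s => ?_
    show ((Real.exp (-((t+s)*a)) * Real.cosh c : ℝ) : ℂ) = _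
    refine Complex.ofReal_inj.mpr ?_
    rw [show -((t+s)*a) = (t+s)*(-a) by ring, hexp (-a) t s]
    ring

lemma nice_Wm_pow (a c : ℝ) (hc : 0 ≤ c) (k : ℕ) :
    ∀ i j : Fin 2, Nice fun t s => ((Wm a c (t + s)) ^ k) i j := by
  induction k with
  | zero =>
    intro i j
    fin_cases i <;> fin_cases j
    · exact nice_of_eq 1 0 zero_le_one fun t s => by simp [Matrix.one_apply]
    · exact nice_of_eq 0 0 le_rfl fun t s => by simp [Matrix.one_apply]
    · exact nice_of_eq 0 0 le_rfl fun t s => by simp [Matrix.one_apply]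
    · exact nice_of_eq 1 0 zero_le_one fun t s => by simp [Matrix.one_apply]
  | succ k ih =>
    intro i j
    have heq : (fun t s => ((Wm a c (t + s)) ^ (k+1)) i j)
        = fun t s => (((Wm a c (t + s)) ^ k) i 0 * (Wm a c (t + s)) 0 j
            + ((Wm a c (t + s)) ^ k) i 1 * (Wm a c (t + s)) 1 j) := by
      funext t s
      rw [pow_succ, Matrix.mul_apply, Fin.sum_univ_two]
    rw [heq]
    exact Nice.add (Nice.mul (ih i 0) (nice_Wm_entry a c hc 0 j))
      (Nice.mul (ih i 1) (nice_Wm_entry a c hc 1 j))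

lemma nice_Wm_trace (a c : ℝ) (hc : 0 ≤ c) (k : ℕ) :
    Nice fun t s => ((Wm a c (t + s)) ^ k).trace := by
  have heq : (fun t s => ((Wm a c (t+s))^k).trace)
      = fun t s => (((Wm a c (t+s))^k) 0 0 + ((Wm a c (t+s))^k) 1 1) := by
    funext t s
    rw [Matrix.trace_fin_two]
  rw [heq]
  exact Nice.add (nice_Wm_pow a c hc k 0 0) (nice_Wm_pow a c hc k 1 1)

lemma Nice.form {K : ℝ → ℝ → ℂ} (hK : Nice K) {N : ℕ} (t : Fin N → ℝ) (ξ : Fin N → ℂ) :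
    0 ≤ ∑ r, ∑ s, K (t r) (t s) * ξ r * (starRingEnd ℂ) (ξ s) := by
  obtain ⟨m, h, hh⟩ := hK
  have hterm : ∀ r s, K (t r) (t s) * ξ r * (starRingEnd ℂ) (ξ s)
      = ∑ i, (((h i (t r) : ℝ) : ℂ) * ξ r)
          * (starRingEnd ℂ) (((h i (t s) : ℝ) : ℂ) * ξ s) := by
    intro r s
    rw [hh, Finset.sum_mul, Finset.sum_mul]
    refine Finset.sum_congr rfl fun i _ => ?_
    rw [_root_.map_mul, Complex.conj_ofReal]
    ring
  have key : ∑ r, ∑ s, K (t r) (t s) * ξ r * (starRingEnd ℂ) (ξ s)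
      = ∑ i : Fin m, (∑ r, ((h i (t r) : ℝ) : ℂ) * ξ r)
        * (starRingEnd ℂ) (∑ r, ((h i (t r) : ℝ) : ℂ) * ξ r) := by
    set T : Fin N → Fin N → Fin m → ℂ := fun r s i =>
      ((((h i (t r) : ℝ) : ℂ) * ξ r) * (starRingEnd ℂ) (((h i (t s) : ℝ) : ℂ) * ξ s))
      with hT
    simp_rw [hterm]
    have rhs : ∀ i : Fin m, (∑ r, ((h i (t r) : ℝ) : ℂ) * ξ r)
        * (starRingEnd ℂ) (∑ r, ((h i (t r) : ℝ) : ℂ) * ξ r)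
        = ∑ r, ∑ s, T r s i := by
      intro i
      rw [map_sum, Finset.sum_mul_sum]
    simp_rw [rhs]
    calc ∑ r, ∑ s, ∑ i, T r s i
        = ∑ r, ∑ i, ∑ s, T r s i :=
          Finset.sum_congr rfl fun r _ => Finset.sum_comm
      _ = ∑ i, ∑ r, ∑ s, T r s i := Finset.sum_comm
  rw [key]
  refine Finset.sum_nonneg fun i _ => ?_
  exact mul_star_self_nonneg _

/-! ### Matrix norm facts and the key limits -/

section WithNorm

attribute [local instance] Matrix.linftyOpNormedAddCommGroup Matrix.linftyOpNormedRing
  Matrix.linftyOpNormedAlgebra Matrix.linfty_opNormOneClass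

lemma continuous_trace2 : Continuous fun A : Matrix (Fin 2) (Fin 2) ℂ => A.trace := by
  have h : (fun A : Matrix (Fin 2) (Fin 2) ℂ => A.trace)
      = fun A => A 0 0 + A 1 1 := by
    funext A
    rw [Matrix.trace_fin_two]
  rw [h]
  exact (continuous_id.matrix_elem 0 0).add (continuous_id.matrix_elem 1 1)

lemma key_tendsto (α β : ℝ) (u : ℝ) :
    Filter.Tendsto (fun n : ℕ => ((Wm (α/n) (β/n) u) ^ n).trace)
      Filter.atTop
      (nhds ((exp (((u * α : ℝ) : ℂ) • pauliσ + (β : ℂ) • pauliτ)).trace)) := by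
  have htrot := trotter (((u * α : ℝ) : ℂ) • pauliσ) ((β : ℂ) • pauliτ)
  have h2 := (continuous_trace2.tendsto _).comp htrot
  have heq : (fun n : ℕ => ((Wm (α/n) (β/n) u) ^ n).trace)
      = fun n : ℕ => ((exp ((n : ℂ)⁻¹ • (((u * α : ℝ) : ℂ) • pauliσ))
          * exp ((n : ℂ)⁻¹ • ((β : ℂ) • pauliτ))) ^ n).trace := by
    funext n
    have e1 : (n : ℂ)⁻¹ • (((u * α : ℝ) : ℂ) • pauliσ) = ((u * (α/n) : ℝ) : ℂ) • pauliσ := by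
      rw [smul_smul]
      congr 1
      push_cast
      ring
    have e2 : (n : ℂ)⁻¹ • ((β : ℂ) • pauliτ) = (((β/n : ℝ)) : ℂ) • pauliτ := by
      rw [smul_smul]
      congr 1
      push_cast
      ring
    rw [e1, e2, Wm_eq (α/n) (β/n) u]
  rw [heq]
  exact h2

lemma continuous_f (α β : ℝ) :
    Continuous fun t : ℝ =>
      ((exp (((t * α : ℝ) : ℂ) • pauliσ + (β : ℂ) • pauliτ)).trace).re := by
  have hM : Continuous fun t : ℝ => (((t * α : ℝ) : ℂ) • pauliσ + (β : ℂ) • pauliτ) := by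
    refine Continuous.add ?_ continuous_const
    exact Continuous.smul (g := fun _ : ℝ => pauliσ)
      (f := fun t : ℝ => ((t * α : ℝ) : ℂ)) (by exact Complex.continuous_ofReal.comp (continuous_id.mul continuous_const)) continuous_const
  exact Complex.continuous_re.comp
    (continuous_trace2.comp (exp_continuous.comp hM))

end WithNorm

end StmtAux

theorem stmt0 (α β : ℝ) (hα : 0 ≤ α) (hβ : 0 ≤ β) :
    (∀ t : ℝ, ((exp (((t * α : ℝ) : ℂ) • pauliσ + (β : ℂ) • pauliτ)).trace).im = 0) ∧
    ExpConvex (fun t : ℝ =>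
      ((exp (((t * α : ℝ) : ℂ) • pauliσ + (β : ℂ) • pauliτ)).trace).re) := by
  classical
  have him : ∀ t : ℝ,
      ((exp (((t * α : ℝ) : ℂ) • pauliσ + (β : ℂ) • pauliτ)).trace).im = 0 := by
    intro t
    have hσ : pauliσᴴ = pauliσ := by
      ext i j
      fin_cases i <;> fin_cases j <;> simp [pauliσ]
    have hτ : pauliτᴴ = pauliτ := by
      ext i j
      fin_cases i <;> fin_cases j <;> simp [pauliτ]
    have hH : (((t * α : ℝ) : ℂ) • pauliσ + (β : ℂ) • pauliτ)ᴴ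
        = ((t * α : ℝ) : ℂ) • pauliσ + (β : ℂ) • pauliτ := by
      rw [Matrix.conjTranspose_add, Matrix.conjTranspose_smul, Matrix.conjTranspose_smul,
        hσ, hτ]
      rw [show star ((t * α : ℝ) : ℂ) = ((t * α : ℝ) : ℂ) from Complex.conj_ofReal _,
        show star ((β : ℝ) : ℂ) = ((β : ℝ) : ℂ) from Complex.conj_ofReal _]
    have h2 : ((exp (((t * α : ℝ) : ℂ) • pauliσ + (β : ℂ) • pauliτ))ᴴ).trace
        = star ((exp (((t * α : ℝ) : ℂ) • pauliσ + (β : ℂ) • pauliτ)).trace) :=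
      Matrix.trace_conjTranspose _
    rw [← Matrix.exp_conjTranspose, hH] at h2
    exact Complex.conj_eq_iff_im.mp h2.symm
  refine ⟨him, StmtAux.continuous_f α β, fun N t ξ => ?_⟩
  have hcast : ∀ u : ℝ,
      ((((exp (((u * α : ℝ) : ℂ) • pauliσ + (β : ℂ) • pauliτ)).trace).re : ℝ) : ℂ)
        = (exp (((u * α : ℝ) : ℂ) • pauliσ + (β : ℂ) • pauliτ)).trace := by
    intro u
    apply Complex.ext
    · simp
    · rw [Complex.ofReal_im, him u]
  have hgoal : ∑ r, ∑ s,
        ((((exp ((((t r + t s) * α : ℝ) : ℂ) • pauliσ + (β : ℂ) • pauliτ)).trace).re : ℝ) : ℂ)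
          * ξ r * (starRingEnd ℂ) (ξ s)
      = ∑ r, ∑ s,
          (exp ((((t r + t s) * α : ℝ) : ℂ) • pauliσ + (β : ℂ) • pauliτ)).trace
            * ξ r * (starRingEnd ℂ) (ξ s) := by
    refine Finset.sum_congr rfl fun r _ => Finset.sum_congr rfl fun s _ => ?_
    rw [hcast]
  show (0 : ℂ) ≤ ∑ r, ∑ s,
      ((((exp ((((t r + t s) * α : ℝ) : ℂ) • pauliσ + (β : ℂ) • pauliτ)).trace).re : ℝ) : ℂ)
        * ξ r * (starRingEnd ℂ) (ξ s)
  rw [hgoal]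
  have hlim : Filter.Tendsto
      (fun n : ℕ => ∑ r, ∑ s, ((StmtAux.Wm (α/n) (β/n) (t r + t s)) ^ n).trace
        * ξ r * (starRingEnd ℂ) (ξ s))
      Filter.atTop
      (nhds (∑ r, ∑ s,
        (exp ((((t r + t s) * α : ℝ) : ℂ) • pauliσ + (β : ℂ) • pauliτ)).trace
          * ξ r * (starRingEnd ℂ) (ξ s))) := by
    refine tendsto_finset_sum _ fun r _ => tendsto_finset_sum _ fun s _ => ?_
    exact ((StmtAux.key_tendsto α β (t r + t s)).mul_const _).mul_const _
  have hpos : ∀ n : ℕ, (0:ℂ) ≤ ∑ r, ∑ s, ((StmtAux.Wm (α/n) (β/n) (t r + t s)) ^ n).trace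
      * ξ r * (starRingEnd ℂ) (ξ s) := by
    intro n
    exact (StmtAux.nice_Wm_trace (α/n) (β/n) (by positivity) n).form t ξ
  set S : ℂ := ∑ r, ∑ s,
      (exp ((((t r + t s) * α : ℝ) : ℂ) • pauliσ + (β : ℂ) • pauliτ)).trace
        * ξ r * (starRingEnd ℂ) (ξ s) with hS
  have hsym : (starRingEnd ℂ) S = S := by
    rw [hS, map_sum, Finset.sum_comm]
    refine Finset.sum_congr rfl fun s _ => ?_
    rw [map_sum]
    refine Finset.sum_congr rfl fun r _ => ?_
    rw [_root_.map_mul, _root_.map_mul, Complex.conj_conj]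
    have hFreal : (starRingEnd ℂ)
        ((exp ((((t s + t r) * α : ℝ) : ℂ) • pauliσ + (β : ℂ) • pauliτ)).trace)
        = (exp ((((t s + t r) * α : ℝ) : ℂ) • pauliσ + (β : ℂ) • pauliτ)).trace :=
      Complex.conj_eq_iff_im.mpr (him _)
    rw [hFreal, show t r + t s = t s + t r from add_comm _ _]
    ring
  rw [Complex.le_def]
  constructor
  · have hre : Filter.Tendsto
        (fun n : ℕ => (∑ r, ∑ s, ((StmtAux.Wm (α/n) (β/n) (t r + t s)) ^ n).trace
          * ξ r * (starRingEnd ℂ) (ξ s)).re) Filter.atTop (nhds S.re) :=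
      (Complex.continuous_re.tendsto _).comp hlim
    have h0 : ∀ n : ℕ, (0:ℝ) ≤ (∑ r, ∑ s, ((StmtAux.Wm (α/n) (β/n) (t r + t s)) ^ n).trace
        * ξ r * (starRingEnd ℂ) (ξ s)).re := by
      intro n
      have := (Complex.le_def.mp (hpos n)).1
      simpa using this
    have := ge_of_tendsto' hre h0
    simpa using this
  · have : S.im = 0 := Complex.conj_eq_iff_im.mp hsym
    simp [this]
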